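/- Let u : ℝ → ℝ be nondecreasing and concave with u(0) = 0, and define u_k(x) = u(I_k(x)) where I_k(x) is the sum of the k largest coordinates of x ∈ ℝ≥0^n. Then u_k is monotone and submodular: for all x ≤ y coordinatewise, u_k(x) ≤ u_k(y), and for all x, y, u_k(x ⊔ y) + u_k(x ⊓ y) ≤ u_k(x) + u_k(y). -/

import Mathlib

open Finset

/-- Sum of the `k` largest coordinates of `x : Fin n → ℝ` (for nonnegative `x`). -/
noncomputable def sumTopK (n k : ℕ) (x : Fin n → ℝ) : ℝ :=
  ((Finset.univ.powerset.filter (fun s : Finset (Fin n) => s.card ≤ k)).sup'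
    ⟨∅, by simp⟩ (fun s => ∑ i ∈ s, x i))

/-- `u_k x = u (I_k x)`, where `I_k x` is the sum of the `k` largest coordinates. -/
noncomputable def uTopK (u : ℝ → ℝ) (n k : ℕ) (x : Fin n → ℝ) : ℝ :=
  u (sumTopK n k x)

lemma le_sumTopK {n k : ℕ} (x : Fin n → ℝ) {s : Finset (Fin n)} (hs : s.card ≤ k) :
    ∑ i ∈ s, x i ≤ sumTopK n k x := by
  unfold sumTopK
  exact Finset.le_sup' (fun s => ∑ i ∈ s, x i) (Finset.mem_filter.mpr ⟨Finset.mem_powerset.mpr (Finset.subset_univ s), hs⟩)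

lemma sumTopK_nonneg {n k : ℕ} {x : Fin n → ℝ} (hx : ∀ i, 0 ≤ x i) :
    0 ≤ sumTopK n k x := by
  simpa using le_sumTopK x (s := ∅) (by simp)

lemma sumTopK_mono {n k : ℕ} {x y : Fin n → ℝ} (h : ∀ i, x i ≤ y i) :
    sumTopK n k x ≤ sumTopK n k y := by
  unfold sumTopK
  apply Finset.sup'_le
  intro s hs
  calc ∑ i ∈ s, x i ≤ ∑ i ∈ s, y i := Finset.sum_le_sum (fun i _ => h i)
    _ ≤ _ := Finset.le_sup' (fun s => ∑ i ∈ s, y i) hs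

lemma sumTopK_le_ub {n k : ℕ} (x : Fin n → ℝ) {t : ℝ} (ht : 0 ≤ t) :
    sumTopK n k x ≤ k * t + ∑ i, max (x i - t) 0 := by
  apply Finset.sup'_le
  intro s hs
  have hcard : s.card ≤ k := (Finset.mem_filter.mp hs).2
  calc ∑ i ∈ s, x i ≤ ∑ i ∈ s, (t + max (x i - t) 0) := by
        apply Finset.sum_le_sum; intro i _
        have := le_max_left (x i - t) 0; linarith
    _ = s.card * t + ∑ i ∈ s, max (x i - t) 0 := by
        rw [Finset.sum_add_distrib]; simp [mul_comm]
    _ ≤ k * t + ∑ i, max (x i - t) 0 := by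
        refine add_le_add ?_ ?_
        · exact mul_le_mul_of_nonneg_right (by exact_mod_cast hcard) ht
        · exact Finset.sum_le_sum_of_subset_of_nonneg (Finset.subset_univ s)
            (fun i _ _ => le_max_right _ _)

lemma exists_topk {n : ℕ} (x : Fin n → ℝ) (k : ℕ) (hk : k ≤ n) :
    ∃ S : Finset (Fin n), S.card = k ∧ ∀ i ∈ S, ∀ j ∉ S, x j ≤ x i := by
  induction k with
  | zero => exact ⟨∅, by simp, by simp⟩
  | succ m ih =>
    obtain ⟨S, hcard, hprop⟩ := ih (Nat.le_of_succ_le hk)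
    have hne : Sᶜ.Nonempty := by
      rw [← Finset.card_pos, Finset.card_compl, hcard]
      simp only [Fintype.card_fin]
      omega
    obtain ⟨j₀, hj₀, hmax⟩ := Finset.exists_max_image Sᶜ x hne
    have hj₀S : j₀ ∉ S := Finset.mem_compl.mp hj₀
    refine ⟨insert j₀ S, ?_, ?_⟩
    · rw [Finset.card_insert_of_notMem hj₀S, hcard]
    · intro i hi j hj
      have hjS : j ∉ S := fun h => hj (Finset.mem_insert_of_mem h)
      rcases Finset.mem_insert.mp hi with rfl | hiS
      · exact hmax j (Finset.mem_compl.mpr hjS)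
      · exact hprop i hiS j hjS

lemma sumTopK_lb {n k : ℕ} {x : Fin n → ℝ} (hx : ∀ i, 0 ≤ x i) :
    ∃ t : ℝ, 0 ≤ t ∧ (k : ℝ) * t + ∑ i, max (x i - t) 0 ≤ sumTopK n k x := by
  by_cases hkn : n ≤ k
  · refine ⟨0, le_refl _, ?_⟩
    have h1 : ∑ i, max (x i - 0) 0 = ∑ i, x i := by
      refine Finset.sum_congr rfl (fun i _ => ?_)
      simpa using max_eq_left (hx i)
    rw [h1]
    have := le_sumTopK x (s := Finset.univ) (by simpa using hkn)
    simpa using this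
  · push_neg at hkn
    rcases Nat.eq_zero_or_pos k with hk0 | hk0
    · subst hk0
      have hn : 0 < n := hkn
      have : Nonempty (Fin n) := Fin.pos_iff_nonempty.mp hn
      have hune : (Finset.univ : Finset (Fin n)).Nonempty := Finset.univ_nonempty
      refine ⟨Finset.univ.sup' hune x, ?_, ?_⟩
      · obtain ⟨i, _, hi⟩ := Finset.exists_mem_eq_sup' hune x
        rw [hi]; exact hx i
      · have h1 : ∑ i, max (x i - Finset.univ.sup' hune x) 0 = 0 := by
          refine Finset.sum_eq_zero (fun i _ => ?_)
          have : x i ≤ Finset.univ.sup' hune x := Finset.le_sup' x (Finset.mem_univ i)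
          rw [max_eq_right (by linarith)]
        rw [h1]
        simpa using sumTopK_nonneg (k := 0) hx
    · obtain ⟨S, hcard, hprop⟩ := exists_topk x k hkn.le
      have hSne : S.Nonempty := Finset.card_pos.mp (hcard ▸ hk0)
      set t := S.inf' hSne x with ht
      have ht0 : 0 ≤ t := Finset.le_inf' hSne x (fun i _ => hx i)
      refine ⟨t, ht0, ?_⟩
      have hout : ∀ j ∉ S, x j ≤ t := by
        intro j hj
        exact Finset.le_inf' hSne x (fun i hi => hprop i hi j hj)
      have hin : ∀ i ∈ S, t ≤ x i := fun i hi => Finset.inf'_le x hi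
      have h1 : ∑ i, max (x i - t) 0 = ∑ i ∈ S, (x i - t) := by
        rw [← Finset.sum_subset (Finset.subset_univ S)]
        · refine Finset.sum_congr rfl (fun i hi => ?_)
          have := hin i hi
          rw [max_eq_left]; linarith
        · intro i _ hi
          have := hout i hi
          rw [max_eq_right]; linarith
      rw [h1, Finset.sum_sub_distrib]
      simp only [Finset.sum_const, hcard, nsmul_eq_mul]
      have := le_sumTopK x (s := S) hcard.le
      linarith

lemma ptwise {a b s t : ℝ} (hst : s ≤ t) :
    max (a ⊔ b - t) 0 + max (a ⊓ b - s) 0 ≤ max (a - s) 0 + max (b - t) 0 := by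
  rcases le_total a b with h | h <;>
    simp only [max_def, min_def] <;> split_ifs <;> linarith

lemma sumTopK_submod_aux {n k : ℕ} {x y : Fin n → ℝ} {tx ty : ℝ}
    (htx : 0 ≤ tx) (hty : 0 ≤ ty) (hle : tx ≤ ty)
    (h1 : (k : ℝ) * tx + ∑ i, max (x i - tx) 0 ≤ sumTopK n k x)
    (h2 : (k : ℝ) * ty + ∑ i, max (y i - ty) 0 ≤ sumTopK n k y) :
    sumTopK n k (x ⊔ y) + sumTopK n k (x ⊓ y) ≤ sumTopK n k x + sumTopK n k y := by
  have hu := sumTopK_le_ub (n := n) (k := k) (x ⊔ y) hty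
  have hl := sumTopK_le_ub (n := n) (k := k) (x ⊓ y) htx
  have hpt : ∑ i, max ((x ⊔ y) i - ty) 0 + ∑ i, max ((x ⊓ y) i - tx) 0
      ≤ ∑ i, max (x i - tx) 0 + ∑ i, max (y i - ty) 0 := by
    rw [← Finset.sum_add_distrib, ← Finset.sum_add_distrib]
    refine Finset.sum_le_sum (fun i _ => ?_)
    simpa [Pi.sup_apply, Pi.inf_apply] using ptwise (a := x i) (b := y i) hle
  linarith

lemma sumTopK_submod {n k : ℕ} {x y : Fin n → ℝ} (hx : ∀ i, 0 ≤ x i) (hy : ∀ i, 0 ≤ y i) :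
    sumTopK n k (x ⊔ y) + sumTopK n k (x ⊓ y) ≤ sumTopK n k x + sumTopK n k y := by
  obtain ⟨tx, htx, h1⟩ := sumTopK_lb (k := k) hx
  obtain ⟨ty, hty, h2⟩ := sumTopK_lb (k := k) hy
  rcases le_total tx ty with hle | hle
  · exact sumTopK_submod_aux htx hty hle h1 h2
  · have := sumTopK_submod_aux hty htx hle h2 h1
    rwa [sup_comm, inf_comm, add_comm (sumTopK n k y)] at this

lemma concave_add {u : ℝ → ℝ} (hconc : ConcaveOn ℝ (Set.Ici (0 : ℝ)) u)
    {b s t : ℝ} (hb : 0 ≤ b) (hs : 0 ≤ s) (ht : 0 ≤ t) :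
    u (b + s + t) + u b ≤ u (b + s) + u (b + t) := by
  rcases eq_or_lt_of_le (add_nonneg hs ht) with h | h
  · have hs0 : s = 0 := by linarith
    have ht0 : t = 0 := by linarith
    simp [hs0, ht0]
  · set L := t / (s + t) with hL
    set M := s / (s + t) with hM
    have hL0 : 0 ≤ L := div_nonneg ht h.le
    have hM0 : 0 ≤ M := div_nonneg hs h.le
    have hLM : L + M = 1 := by
      rw [hL, hM, ← add_div, add_comm]
      exact div_self h.ne'
    have hmem1 : b ∈ Set.Ici (0 : ℝ) := hb
    have hmem2 : b + s + t ∈ Set.Ici (0 : ℝ) := by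
      simp only [Set.mem_Ici]; linarith
    have h1 := hconc.2 hmem1 hmem2 hL0 hM0 hLM
    have h2 := hconc.2 hmem1 hmem2 hM0 hL0 (by linarith)
    simp only [smul_eq_mul] at h1 h2
    have e1 : L * b + M * (b + s + t) = b + s := by
      rw [hL, hM]; field_simp; ring
    have e2 : M * b + L * (b + s + t) = b + t := by
      rw [hL, hM]; field_simp; ring
    rw [e1] at h1
    rw [e2] at h2
    have hM' : M = 1 - L := by linarith
    have hsum := add_le_add h1 h2
    have heq : L * u b + M * u (b + s + t) + (M * u b + L * u (b + s + t))
        = u b + u (b + s + t) := by rw [hM']; ring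
    linarith

/-- For `u` nondecreasing, concave with `u 0 = 0`, the function
`u_k x = u (I_k x)` is monotone and submodular on nonnegative vectors. -/
theorem uTopK_monotone_submodular (u : ℝ → ℝ)
    (hconc : ConcaveOn ℝ (Set.Ici (0 : ℝ)) u) (hmono : Monotone u)
    (h0 : u 0 = 0) (n k : ℕ) :
    (∀ x y : Fin n → ℝ, (∀ i, 0 ≤ x i) → (∀ i, x i ≤ y i) →
      uTopK u n k x ≤ uTopK u n k y) ∧
    (∀ x y : Fin n → ℝ, (∀ i, 0 ≤ x i) → (∀ i, 0 ≤ y i) →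
      uTopK u n k (x ⊔ y) + uTopK u n k (x ⊓ y) ≤ uTopK u n k x + uTopK u n k y) := by
  constructor
  · intro x y _ hxy
    exact hmono (sumTopK_mono hxy)
  · intro x y hx hy
    set a := sumTopK n k (x ⊔ y) with ha
    set b := sumTopK n k (x ⊓ y) with hbd
    set c := sumTopK n k x with hc
    set d := sumTopK n k y with hd
    have hb0 : 0 ≤ b :=
      sumTopK_nonneg (fun i => by simpa [Pi.inf_apply] using le_min (hx i) (hy i))
    have hbc : b ≤ c := sumTopK_mono (fun i => by simpa [Pi.inf_apply] using min_le_left (x i) (y i))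
    have hbd' : b ≤ d := sumTopK_mono (fun i => by simpa [Pi.inf_apply] using min_le_right (x i) (y i))
    have habcd : a + b ≤ c + d := sumTopK_submod hx hy
    have hkey : u (b + (c - b) + (d - b)) + u b ≤ u (b + (c - b)) + u (b + (d - b)) :=
      concave_add hconc hb0 (by linarith) (by linarith)
    have e1 : b + (c - b) + (d - b) = c + d - b := by ring
    have e2 : b + (c - b) = c := by ring
    have e3 : b + (d - b) = d := by ring
    rw [e1, e2, e3] at hkey
    have hua : u a ≤ u (c + d - b) := hmono (by linarith)
    show u a + u b ≤ u c + u d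
    linarith
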